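/- Let d ≥ 2, let Σ be a symmetric positive semidefinite real d×d matrix and r_1, …, r_d ∈ ℝ, set r := Σ_{j=1}^d r_j, σ² := Σ_{j,k=1}^d Σ_{jk}, and s_i := Σ_{j=1}^d Σ_{ij}. Assume r < 0 and σ² > 0, and let α ∈ (0, 1). Let N ⊆ {1, …, d} be a nonempty subset with r_N := Σ_{i∈N} r_i < 0, and set σ_N² := Σ_{i,j∈N} Σ_{ij}. Then Σ_{i∈N} ln α·(2r²·s_i − r_i·r·σ²)/(2r³) ≤ (σ_N²/(2·r_N))·ln α. -/

import Mathlib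

open Real Finset

/-- ('No undercut' property.) In the Brownian risk model with drift vector
`rv` and covariance matrix `C`, with `r = ∑ⱼ rvⱼ < 0`, `σ² = ∑_{j,k} C j k > 0` and
`α ∈ (0,1)`: for any nonempty sub-portfolio `N` with `r_N = ∑_{i∈N} rvᵢ < 0` and
`σ_N² = ∑_{i,j∈N} C i j`, the total gradient allocation of `N` does not exceed the
stand-alone capital of `N`:
`∑_{i∈N} ln α·(2r²·sᵢ − rᵢ·r·σ²)/(2r³) ≤ (σ_N²/(2r_N))·ln α` where `sᵢ = ∑ⱼ C i j`. -/
theorem stmt_19 (d : ℕ) (hd : 2 ≤ d)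
    (C : Matrix (Fin d) (Fin d) ℝ) (hC : C.PosSemidef)
    (rv : Fin d → ℝ) (r σ2 : ℝ) (hr : r = ∑ j, rv j) (hσ2 : σ2 = ∑ j, ∑ k, C j k)
    (hrneg : r < 0) (hσ2pos : 0 < σ2) (α : ℝ) (hα : α ∈ Set.Ioo (0 : ℝ) 1)
    (N : Finset (Fin d)) (hN : N.Nonempty)
    (rN : ℝ) (hrN : rN = ∑ i ∈ N, rv i) (hrNneg : rN < 0)
    (σN2 : ℝ) (hσN2 : σN2 = ∑ i ∈ N, ∑ j ∈ N, C i j) :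
    ∑ i ∈ N, Real.log α * (2 * r ^ 2 * (∑ j, C i j) - rv i * r * σ2) / (2 * r ^ 3)
      ≤ σN2 / (2 * rN) * Real.log α := by
  set L := Real.log α with hL
  have hLneg : L < 0 := Real.log_neg hα.1 hα.2
  set A : ℝ := ∑ i ∈ N, ∑ j, C i j with hA
  -- indicator
  set χ : Fin d → ℝ := fun i => if i ∈ N then 1 else 0 with hχ
  have h1 : ∀ f : Fin d → ℝ, ∑ i, χ i * f i = ∑ i ∈ N, f i := by
    intro f
    simp [hχ, ite_mul, Finset.sum_ite_mem]
  have hsym : ∀ i j, C i j = C j i := by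
    intro i j
    have := hC.1.apply j i
    simp only [RCLike.star_def, starRingEnd_apply, star_trivial] at this
    exact this
  -- positive semidefiniteness applied to v = rN•1 - r•χ
  set v : Fin d → ℝ := fun i => rN - r * χ i with hv
  have hq : 0 ≤ ∑ i, v i * ∑ j, C i j * v j := by
    have := hC.dotProduct_mulVec_nonneg v
    simpa [dotProduct, Matrix.mulVec] using this
  have e2 : ∑ i, ∑ j, χ i * C i j = A := by
    rw [hA]
    rw [← h1 (fun i => ∑ j, C i j)]
    refine Finset.sum_congr rfl fun i _ => ?_
    rw [Finset.mul_sum]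
  have e3 : ∑ i, ∑ j, C i j * χ j = A := by
    rw [Finset.sum_comm]
    rw [hA, ← h1 (fun i => ∑ j, C i j)]
    refine Finset.sum_congr rfl fun j _ => ?_
    rw [Finset.mul_sum]
    refine Finset.sum_congr rfl fun i _ => ?_
    rw [hsym i j]; ring
  have e4 : ∑ i, ∑ j, χ i * (C i j * χ j) = σN2 := by
    rw [hσN2, ← h1 (fun i => ∑ j ∈ N, C i j)]
    refine Finset.sum_congr rfl fun i _ => ?_
    rw [← h1 (fun j => C i j), Finset.mul_sum]
    exact Finset.sum_congr rfl fun j _ => by ring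
  have hQ : 0 ≤ rN^2*σ2 - 2*r*rN*A + r^2*σN2 := by
    have hexp : ∑ i, v i * ∑ j, C i j * v j
        = rN^2 * (∑ i, ∑ j, C i j) - r*rN*(∑ i, ∑ j, χ i * C i j)
          - r*rN*(∑ i, ∑ j, C i j * χ j) + r^2*(∑ i, ∑ j, χ i * (C i j * χ j)) := by
      rw [Finset.mul_sum, Finset.mul_sum, Finset.mul_sum, Finset.mul_sum,
        ← Finset.sum_sub_distrib, ← Finset.sum_sub_distrib, ← Finset.sum_add_distrib]
      refine Finset.sum_congr rfl fun i _ => ?_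
      rw [Finset.mul_sum, Finset.mul_sum, Finset.mul_sum, Finset.mul_sum, Finset.mul_sum,
        ← Finset.sum_sub_distrib, ← Finset.sum_sub_distrib, ← Finset.sum_add_distrib]
      refine Finset.sum_congr rfl fun j _ => ?_
      simp only [hv]; ring
    rw [hexp, e2, e3, e4, ← hσ2] at hq
    linarith [hq]
  -- rewrite the LHS sum
  have hsum : ∑ i ∈ N, L * (2 * r ^ 2 * (∑ j, C i j) - rv i * r * σ2) / (2 * r ^ 3)
      = L * (2 * r^2 * A - rN * r * σ2) / (2 * r^3) := by
    rw [← Finset.sum_div]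
    congr 1
    rw [← Finset.mul_sum]
    congr 1
    rw [Finset.sum_sub_distrib, hA, ← Finset.mul_sum, ← Finset.sum_mul, ← Finset.sum_mul, ← hrN]
  rw [hsum]
  have hr2 : (0:ℝ) < r^2 := by nlinarith
  have hden : 2 * rN * r^2 < 0 := mul_neg_of_neg_of_pos (by linarith) hr2
  have h1' : σN2 / (2*rN) * L - L * (2 * r^2 * A - rN * r * σ2) / (2 * r^3)
      = (L * (rN^2*σ2 - 2*r*rN*A + r^2*σN2)) / (2 * rN * r^2) := by
    have hr0 : r ≠ 0 := ne_of_lt hrneg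
    have hrN0 : rN ≠ 0 := ne_of_lt hrNneg
    field_simp
    ring
  have hnum : L * (rN^2*σ2 - 2*r*rN*A + r^2*σN2) ≤ 0 :=
    mul_nonpos_of_nonpos_of_nonneg (le_of_lt hLneg) hQ
  have : 0 ≤ (L * (rN^2*σ2 - 2*r*rN*A + r^2*σN2)) / (2 * rN * r^2) := by
    rw [div_nonneg_iff]
    exact Or.inr ⟨hnum, le_of_lt hden⟩
  linarith [h1' ▸ this]
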